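/- Finite generation of invariants of a compact linear group (Hilbert): let n be a natural number and G a subgroup of the general linear group GL (Fin n) ℝ whose image in Matrix (Fin n) (Fin n) ℝ is a compact set. Then the subalgebra of G-invariant polynomials, Inv = {P : MvPolynomial (Fin n) ℝ | ∀ g ∈ G, ∀ x : Fin n → ℝ, eval ((g : Matrix (Fin n) (Fin n) ℝ).mulVec x) P = eval x P}, is a finitely generated ℝ-subalgebra of MvPolynomial (Fin n) ℝ (i.e. Inv.FG holds). -/

import Mathlib

open Matrix MvPolynomial

/-- The `ℝ`-subalgebra of `G`-invariant polynomials in `n` variables, for a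
subgroup `G` of `GL (Fin n) ℝ` acting by matrix-vector multiplication. -/
noncomputable def invariantSubalgebra {n : ℕ} (G : Subgroup (GL (Fin n) ℝ)) :
    Subalgebra ℝ (MvPolynomial (Fin n) ℝ) where
  carrier := {P | ∀ g ∈ G, ∀ x : Fin n → ℝ,
    eval ((g : Matrix (Fin n) (Fin n) ℝ).mulVec x) P = eval x P}
  add_mem' := by
    intro P Q hP hQ g hg x
    simp only [map_add, hP g hg x, hQ g hg x]
  mul_mem' := by
    intro P Q hP hQ g hg x
    simp only [_root_.map_mul, hP g hg x, hQ g hg x]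
  algebraMap_mem' := by
    intro c g hg x
    simp [MvPolynomial.algebraMap_eq]

namespace HilbertAux

open MeasureTheory

set_option linter.unusedSectionVars false

variable {n : ℕ}

/-- Substitution along a matrix. -/
noncomputable def psi (M : Matrix (Fin n) (Fin n) ℝ) :
    MvPolynomial (Fin n) ℝ →ₐ[ℝ] MvPolynomial (Fin n) ℝ :=
  aeval fun i => ∑ j, C (M i j) * X j

lemma eval_psi (M : Matrix (Fin n) (Fin n) ℝ) (x : Fin n → ℝ) (p : MvPolynomial (Fin n) ℝ) :
    eval x (psi M p) = eval (M.mulVec x) p := by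
  have : ((aeval x).restrictScalars ℝ).comp (psi M) = aeval (M.mulVec x) := by
    apply MvPolynomial.algHom_ext
    intro i
    simp [psi, Matrix.mulVec, dotProduct, mul_comm]
  calc eval x (psi M p) = ((aeval x).restrictScalars ℝ).comp (psi M) p := rfl
    _ = aeval (M.mulVec x) p := by rw [this]
    _ = eval (M.mulVec x) p := rfl

lemma psi_psi (M N : Matrix (Fin n) (Fin n) ℝ) (p : MvPolynomial (Fin n) ℝ) :
    psi M (psi N p) = psi (N * M) p := by
  apply MvPolynomial.funext
  intro x
  rw [eval_psi, eval_psi, eval_psi, Matrix.mulVec_mulVec]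

lemma psi_isHomogeneous (M : Matrix (Fin n) (Fin n) ℝ) {p : MvPolynomial (Fin n) ℝ} {d : ℕ}
    (hp : p.IsHomogeneous d) : (psi M p).IsHomogeneous d := by
  have h1 : ∀ i, ((∑ j, C (M i j) * X j : MvPolynomial (Fin n) ℝ)).IsHomogeneous 1 := by
    intro i
    exact IsHomogeneous.sum _ _ _ fun j _ => isHomogeneous_C_mul_X _ _
  simpa [psi] using hp.aeval (fun i => ∑ j, C (M i j) * X j) h1

lemma totalDegree_psi_le (M : Matrix (Fin n) (Fin n) ℝ) (p : MvPolynomial (Fin n) ℝ) :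
    (psi M p).totalDegree ≤ p.totalDegree := by
  conv_lhs => rw [← sum_homogeneousComponent p]
  rw [map_sum]
  refine le_trans (totalDegree_finset_sum _ _) ?_
  refine Finset.sup_le fun k hk => ?_
  rcases eq_or_ne (homogeneousComponent k p) 0 with h0 | h0
  · simp [h0]
  have hk' : k ≤ p.totalDegree := by
    by_contra hlt
    exact h0 (homogeneousComponent_eq_zero _ _ (lt_of_not_ge hlt))
  refine le_trans ?_ hk'
  rcases eq_or_ne (psi M (homogeneousComponent k p)) 0 with h1 | h1
  · simp [h1]
  exact le_of_eq ((psi_isHomogeneous M (homogeneousComponent_isHomogeneous k p)).totalDegree h1)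

lemma psi_homogeneousComponent (M : Matrix (Fin n) (Fin n) ℝ) (k : ℕ)
    (p : MvPolynomial (Fin n) ℝ) :
    psi M (homogeneousComponent k p) = homogeneousComponent k (psi M p) := by
  conv_rhs => rw [← sum_homogeneousComponent p]
  rw [map_sum, map_sum]
  have : ∀ j ∈ Finset.range (p.totalDegree + 1),
      homogeneousComponent k (psi M (homogeneousComponent j p))
        = if j = k then psi M (homogeneousComponent j p) else 0 := by
    intro j _
    rw [homogeneousComponent_of_mem
      ((mem_homogeneousSubmodule j _).2
        (psi_isHomogeneous M (homogeneousComponent_isHomogeneous j p)))]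
    simp only [eq_comm]
  rw [Finset.sum_congr rfl this,
    Finset.sum_ite_eq' (Finset.range (p.totalDegree + 1)) k
      (fun j => psi M (homogeneousComponent j p))]
  split_ifs with h
  · rfl
  · rw [Finset.mem_range, not_lt] at h
    rw [homogeneousComponent_eq_zero _ _ (lt_of_lt_of_le (Nat.lt_succ_self _) h), map_zero]

lemma continuous_coeff_psi (p : MvPolynomial (Fin n) ℝ) (d : Fin n →₀ ℕ) :
    Continuous fun M : Matrix (Fin n) (Fin n) ℝ => coeff d (psi M p) := by
  induction p using MvPolynomial.induction_on generalizing d with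
  | C c => simpa [psi] using continuous_const
  | add p q hp hq =>
    simp only [map_add, coeff_add]
    exact (hp d).add (hq d)
  | mul_X p i hp =>
    have hlin : ∀ b : Fin n →₀ ℕ, Continuous fun M : Matrix (Fin n) (Fin n) ℝ =>
        coeff b (psi M (X i)) := by
      intro b
      simp only [psi, aeval_X, MvPolynomial.coeff_sum, coeff_C_mul]
      exact continuous_finset_sum _ fun j _ =>
        ((continuous_id.matrix_elem i j).mul continuous_const)
    simp only [_root_.map_mul, coeff_mul]
    exact continuous_finset_sum _ fun x _ => (hp x.1).mul (hlin x.2)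

/-- Left action of `GL` on polynomials. -/
noncomputable def act (u : GL (Fin n) ℝ) :
    MvPolynomial (Fin n) ℝ →ₐ[ℝ] MvPolynomial (Fin n) ℝ :=
  psi (↑(u⁻¹) : Matrix (Fin n) (Fin n) ℝ)

lemma act_act (u v : GL (Fin n) ℝ) (p : MvPolynomial (Fin n) ℝ) :
    act u (act v p) = act (u * v) p := by
  rw [act, act, act, psi_psi, _root_.mul_inv_rev, Units.val_mul]

noncomputable def degSet (h : MvPolynomial (Fin n) ℝ) : Finset (Fin n →₀ ℕ) :=
  Finset.Iic (Finsupp.equivFunOnFinite.symm fun _ : Fin n => h.totalDegree)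

lemma support_act_subset (u : GL (Fin n) ℝ) (h : MvPolynomial (Fin n) ℝ) :
    (act u h).support ⊆ degSet h := by
  intro d hd
  rw [degSet, Finset.mem_Iic]
  intro i
  have h1 : d i ≤ d.sum fun _ e => e := by
    by_cases hi : i ∈ d.support
    · exact Finset.single_le_sum (fun _ _ => Nat.zero_le _) hi
    · simp [Finsupp.notMem_support_iff.1 hi]
  have h2 : (d.sum fun _ e => e) ≤ (act u h).totalDegree := le_totalDegree hd
  have h3 : (act u h).totalDegree ≤ h.totalDegree := totalDegree_psi_le _ _
  simpa using le_trans h1 (le_trans h2 h3)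

lemma homogeneousComponent_mul_right (q r : MvPolynomial (Fin n) ℝ) {e : ℕ}
    (hr : r.IsHomogeneous e) (d : ℕ) :
    homogeneousComponent d (q * r)
      = if e ≤ d then homogeneousComponent (d - e) q * r else 0 := by
  conv_lhs => rw [← sum_homogeneousComponent q, Finset.sum_mul, map_sum]
  have hterm : ∀ k ∈ Finset.range (q.totalDegree + 1),
      homogeneousComponent d (homogeneousComponent k q * r)
        = if d = k + e then homogeneousComponent k q * r else 0 := fun k _ =>
    homogeneousComponent_of_mem ((mem_homogeneousSubmodule _ _).2
      ((homogeneousComponent_isHomogeneous k q).mul hr))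
  rw [Finset.sum_congr rfl hterm]
  by_cases hed : e ≤ d
  · rw [if_pos hed]
    by_cases hN : d - e ≤ q.totalDegree
    · rw [Finset.sum_eq_single (d - e)]
      · rw [if_pos (by omega)]
      · intro k _ hk
        rw [if_neg (by omega)]
      · intro habs
        exact absurd (Finset.mem_range.2 (by omega)) habs
    · rw [Finset.sum_eq_zero, homogeneousComponent_eq_zero _ q (by omega), zero_mul]
      intro k hk
      rw [Finset.mem_range] at hk
      rw [if_neg (by omega)]
  · rw [if_neg hed, Finset.sum_eq_zero]
    intro k _
    rw [if_neg (by omega)]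

lemma eq_C_of_isHomogeneous_zero {p : MvPolynomial (Fin n) ℝ}
    (hp : p.IsHomogeneous 0) : p = C (coeff 0 p) := by
  have h := (totalDegree_eq_zero_iff _ p).1 ((totalDegree_zero_iff_isHomogeneous _).2 hp)
  ext m
  rcases eq_or_ne m 0 with rfl | hm
  · simp
  · have hns : m ∉ p.support := fun hs => hm (Finsupp.ext fun x => h m hs x)
    rw [notMem_support_iff.1 hns, coeff_C, if_neg (Ne.symm hm)]

lemma compact_subgroup (G : Subgroup (GL (Fin n) ℝ))
    (hG : IsCompact {M : Matrix (Fin n) (Fin n) ℝ |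
      ∃ g ∈ G, (g : Matrix (Fin n) (Fin n) ℝ) = M}) :
    IsCompact ((G : Set (GL (Fin n) ℝ))) := by
  set S := {M : Matrix (Fin n) (Fin n) ℝ | ∃ g ∈ G, (g : Matrix (Fin n) (Fin n) ℝ) = M}
  rw [Units.isEmbedding_embedProduct.isCompact_iff]
  have himg : Units.embedProduct _ '' (G : Set (GL (Fin n) ℝ))
      = (fun M : Matrix (Fin n) (Fin n) ℝ => (M, MulOpposite.op M⁻¹)) '' S := by
    ext ⟨P, Q⟩
    constructor
    · rintro ⟨g, hg, h⟩
      refine ⟨(g : Matrix (Fin n) (Fin n) ℝ), ⟨g, hg, rfl⟩, ?_⟩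
      rw [← h]
      simp [Units.embedProduct, Matrix.coe_units_inv]
    · rintro ⟨M, ⟨g, hg, rfl⟩, h⟩
      refine ⟨g, hg, ?_⟩
      rw [← h]
      simp [Units.embedProduct, Matrix.coe_units_inv]
  rw [himg]
  refine hG.image_of_continuousOn ?_
  refine continuousOn_id.prodMk ?_
  refine MulOpposite.continuous_op.comp_continuousOn ?_
  intro M hM
  refine (continuousAt_matrix_inv M ?_).continuousWithinAt
  obtain ⟨g, hg, rfl⟩ := hM
  have hdet : IsUnit (g : Matrix (Fin n) (Fin n) ℝ).det :=
    (Matrix.isUnit_iff_isUnit_det _).1 g.isUnit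
  have hne : (g : Matrix (Fin n) (Fin n) ℝ).det ≠ 0 := hdet.ne_zero
  have : ContinuousAt (fun x : ℝ => x⁻¹) (g : Matrix (Fin n) (Fin n) ℝ).det :=
    continuousAt_inv₀ hne
  simpa [Ring.inverse_eq_inv'] using this

section Measure

variable (G : Subgroup (GL (Fin n) ℝ)) [MeasurableSpace ↥G] [BorelSpace ↥G] [CompactSpace ↥G]
  (μ : Measure ↥G) [IsProbabilityMeasure μ] [μ.IsMulLeftInvariant]

/-- The Reynolds (averaging) operator. -/
noncomputable def reyn (h : MvPolynomial (Fin n) ℝ) : MvPolynomial (Fin n) ℝ :=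
  ∑ d ∈ degSet h, (∫ g : ↥G, coeff d (act ↑g h) ∂μ) • (monomial d (1 : ℝ))

lemma continuous_coeff_act (h : MvPolynomial (Fin n) ℝ) (e : Fin n →₀ ℕ) :
    Continuous fun g : ↥G => coeff e (act ↑g h) :=
  (continuous_coeff_psi h e).comp
    (Units.continuous_val.comp (continuous_inv.comp continuous_subtype_val))

lemma integrable_coeff_act (h : MvPolynomial (Fin n) ℝ) (e : Fin n →₀ ℕ) :
    Integrable (fun g : ↥G => coeff e (act ↑g h)) μ :=
  (continuous_coeff_act G h e).integrable_of_hasCompactSupport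
    (isCompact_univ.of_isClosed_subset (isClosed_tsupport _) (Set.subset_univ _))

lemma coeff_reyn (h : MvPolynomial (Fin n) ℝ) (e : Fin n →₀ ℕ) :
    coeff e (reyn G μ h) = ∫ g : ↥G, coeff e (act ↑g h) ∂μ := by
  rw [reyn, MvPolynomial.coeff_sum]
  simp only [coeff_smul, coeff_monomial, smul_eq_mul, mul_ite, mul_one, mul_zero]
  rw [Finset.sum_ite_eq' (degSet h) e fun d => ∫ g : ↥G, coeff d (act ↑g h) ∂μ]
  split_ifs with he
  · rfl
  · have hz : ∀ g : ↥G, coeff e (act ↑g h) = 0 := fun g =>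
      notMem_support_iff.1 fun hc => he (support_act_subset _ h hc)
    simp [hz]

lemma reyn_of_invariant {p : MvPolynomial (Fin n) ℝ} (hp : ∀ g : ↥G, act ↑g p = p) :
    reyn G μ p = p := by
  apply MvPolynomial.ext
  intro e
  rw [coeff_reyn]
  simp only [hp]
  rw [integral_const]
  simp

lemma reyn_finset_sum {α : Type*} (s : Finset α) (q : α → MvPolynomial (Fin n) ℝ) :
    reyn G μ (∑ i ∈ s, q i) = ∑ i ∈ s, reyn G μ (q i) := by
  apply MvPolynomial.ext
  intro e
  rw [coeff_reyn]
  have h1 : ∀ g : ↥G, coeff e (act ↑g (∑ i ∈ s, q i)) = ∑ i ∈ s, coeff e (act ↑g (q i)) := by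
    intro g
    rw [map_sum, MvPolynomial.coeff_sum]
  simp only [h1]
  rw [integral_finset_sum _ (fun i _ => integrable_coeff_act G μ (q i) e),
    MvPolynomial.coeff_sum]
  exact Finset.sum_congr rfl fun i _ => (coeff_reyn G μ (q i) e).symm

lemma reyn_mul_invariant (c f : MvPolynomial (Fin n) ℝ) (hf : ∀ g : ↥G, act ↑g f = f) :
    reyn G μ (c * f) = reyn G μ c * f := by
  apply MvPolynomial.ext
  intro e
  rw [coeff_reyn, coeff_mul]
  have h1 : ∀ x ∈ Finset.HasAntidiagonal.antidiagonal e, coeff x.1 (reyn G μ c) * coeff x.2 f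
      = ∫ g : ↥G, coeff x.1 (act ↑g c) * coeff x.2 f ∂μ := by
    intro x _
    rw [coeff_reyn, integral_mul_const]
  rw [Finset.sum_congr rfl h1,
    ← integral_finset_sum _ (fun x _ => (integrable_coeff_act G μ c x.1).mul_const _)]
  congr 1
  funext g
  rw [_root_.map_mul, hf g, coeff_mul]

lemma sum_coeff_smul_monomial (q : MvPolynomial (Fin n) ℝ) {D : Finset (Fin n →₀ ℕ)}
    (hD : q.support ⊆ D) :
    ∑ d ∈ D, coeff d q • monomial d (1 : ℝ) = q := by
  have : ∀ d ∈ D, coeff d q • monomial d (1 : ℝ) = monomial d (coeff d q) := by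
    intro d _
    rw [smul_monomial, smul_eq_mul, mul_one]
  rw [Finset.sum_congr rfl this]
  rw [← Finset.sum_subset hD (fun d _ hd => by
    rw [notMem_support_iff.1 hd, map_zero])]
  exact (as_sum q).symm

lemma act_reyn (h : MvPolynomial (Fin n) ℝ) (g₀ : ↥G) :
    act ↑g₀ (reyn G μ h) = reyn G μ h := by
  apply MvPolynomial.ext
  intro e
  have key : ∀ g : ↥G,
      (∑ d ∈ degSet h, coeff d (act ↑g h) * coeff e (act ↑g₀ (monomial d 1)))
        = coeff e (act ↑(g₀ * g) h) := by
    intro g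
    calc (∑ d ∈ degSet h, coeff d (act ↑g h) * coeff e (act ↑g₀ (monomial d 1)))
        = coeff e (act ↑g₀ (∑ d ∈ degSet h, coeff d (act ↑g h) • monomial d (1 : ℝ))) := by
          rw [map_sum, MvPolynomial.coeff_sum]
          refine Finset.sum_congr rfl fun d _ => ?_
          rw [_root_.map_smul, coeff_smul, smul_eq_mul]
      _ = coeff e (act ↑g₀ (act ↑g h)) := by
          rw [sum_coeff_smul_monomial _ (support_act_subset _ h)]
      _ = coeff e (act ↑(g₀ * g) h) := by rw [act_act, ← Subgroup.coe_mul]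
  calc coeff e (act ↑g₀ (reyn G μ h))
      = ∑ d ∈ degSet h, (∫ g : ↥G, coeff d (act ↑g h) ∂μ) * coeff e (act ↑g₀ (monomial d 1)) := by
        rw [reyn, map_sum, MvPolynomial.coeff_sum]
        refine Finset.sum_congr rfl fun d _ => ?_
        rw [_root_.map_smul, coeff_smul, smul_eq_mul]
    _ = ∑ d ∈ degSet h, ∫ g : ↥G, coeff d (act ↑g h) * coeff e (act ↑g₀ (monomial d 1)) ∂μ :=
        Finset.sum_congr rfl fun d _ => (integral_mul_const _ _).symm
    _ = ∫ g : ↥G, ∑ d ∈ degSet h, coeff d (act ↑g h) * coeff e (act ↑g₀ (monomial d 1)) ∂μ :=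
        (integral_finset_sum _ fun d _ => (integrable_coeff_act G μ h d).mul_const _).symm
    _ = ∫ g : ↥G, coeff e (act ↑(g₀ * g) h) ∂μ := by
        congr 1
        funext g
        exact key g
    _ = ∫ g : ↥G, coeff e (act ↑g h) ∂μ :=
        integral_mul_left_eq_self (fun g : ↥G => coeff e (act (↑g : GL (Fin n) ℝ) h)) g₀
    _ = coeff e (reyn G μ h) := (coeff_reyn G μ h e).symm

end Measure

lemma mem_invariant_iff (G : Subgroup (GL (Fin n) ℝ)) (p : MvPolynomial (Fin n) ℝ) :
    p ∈ invariantSubalgebra G ↔ ∀ g : ↥G, act ↑g p = p := by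
  have hmem : p ∈ invariantSubalgebra G ↔ ∀ g ∈ G, ∀ x : Fin n → ℝ,
      eval ((g : Matrix (Fin n) (Fin n) ℝ).mulVec x) p = eval x p := Iff.rfl
  rw [hmem]
  constructor
  · intro hp g
    rw [act]
    apply MvPolynomial.funext
    intro x
    rw [eval_psi]
    have h1 : ((g : GL (Fin n) ℝ))⁻¹ = ((g⁻¹ : ↥G) : GL (Fin n) ℝ) := rfl
    rw [h1]
    exact hp _ (g⁻¹ : ↥G).2 x
  · intro hp g hg x
    have h2 := hp ⟨g⁻¹, G.inv_mem hg⟩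
    rw [act] at h2
    have h3 : ((⟨g⁻¹, G.inv_mem hg⟩ : ↥G) : GL (Fin n) ℝ)⁻¹ = g := by simp
    rw [h3] at h2
    conv_rhs => rw [← h2]
    rw [eval_psi]

end HilbertAux

open HilbertAux MeasureTheory in
/-- Hilbert's finiteness theorem for compact linear groups: if `G` is a
subgroup of `GL (Fin n) ℝ` whose set of matrices is compact, then the algebra
of `G`-invariant polynomials is a finitely generated `ℝ`-subalgebra. -/
theorem invariantSubalgebra_fg_of_isCompact {n : ℕ} (G : Subgroup (GL (Fin n) ℝ))
    (hG : IsCompact {M : Matrix (Fin n) (Fin n) ℝ |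
      ∃ g ∈ G, (g : Matrix (Fin n) (Fin n) ℝ) = M}) :
    (invariantSubalgebra G).FG := by
  classical
  have hGL : IsCompact ((G : Set (GL (Fin n) ℝ))) := compact_subgroup G hG
  haveI hCS : CompactSpace ↥G := isCompact_iff_compactSpace.mp hGL
  letI : MeasurableSpace ↥G := borel _
  haveI : BorelSpace ↥G := ⟨rfl⟩
  letI μ : Measure ↥G := Measure.haarMeasure ⊤
  haveI : IsProbabilityMeasure μ := ⟨by
    rw [← TopologicalSpace.PositiveCompacts.coe_top (α := ↥G)]
    exact Measure.haarMeasure_self⟩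
  haveI : μ.IsMulLeftInvariant := Measure.isMulLeftInvariant_haarMeasure ⊤
  -- the set of invariant homogeneous polynomials of positive degree
  set B : Set (MvPolynomial (Fin n) ℝ) :=
    {q | (∀ g : ↥G, act ↑g q = q) ∧ ∃ e, 0 < e ∧ q.IsHomogeneous e} with hB
  -- a finite generating set for the ideal spanned by B, consisting of elements of B
  obtain ⟨s, hs⟩ : (Ideal.span B).FG := IsNoetherian.noetherian _
  have hsub : ∀ x : ↥(s : Set (MvPolynomial (Fin n) ℝ)),
      ∃ T : Finset (MvPolynomial (Fin n) ℝ),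
        ↑T ⊆ B ∧ (x : MvPolynomial (Fin n) ℝ) ∈ Submodule.span (MvPolynomial (Fin n) ℝ) (T : Set (MvPolynomial (Fin n) ℝ)) := by
    intro x
    refine Submodule.mem_span_finite_of_mem_span ?_
    rw [show (Submodule.span (MvPolynomial (Fin n) ℝ) B) = Ideal.span B from rfl, ← hs]
    exact Submodule.subset_span x.2
  choose t ht1 ht2 using hsub
  set T : Finset (MvPolynomial (Fin n) ℝ) := s.attach.biUnion t with hT
  have hTB : (T : Set (MvPolynomial (Fin n) ℝ)) ⊆ B := by
    intro x hx
    rw [hT] at hx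
    simp only [Finset.coe_biUnion, Set.mem_iUnion, Finset.mem_coe] at hx
    obtain ⟨i, _, hi⟩ := hx
    exact ht1 i hi
  have hTspan : Submodule.span (MvPolynomial (Fin n) ℝ) (T : Set (MvPolynomial (Fin n) ℝ))
      = Ideal.span B := by
    apply le_antisymm
    · rw [Submodule.span_le]
      exact fun x hx => Ideal.subset_span (hTB hx)
    · rw [← hs, Ideal.span_le]
      intro x hx
      refine Submodule.span_mono ?_ (ht2 ⟨x, hx⟩)
      intro y hy
      rw [hT]
      simp only [Finset.coe_biUnion, Set.mem_iUnion, Finset.mem_coe]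
      exact ⟨⟨x, hx⟩, Finset.mem_attach _ _, hy⟩
  -- invariance of homogeneous components
  have hinv_hc : ∀ p : MvPolynomial (Fin n) ℝ, (∀ g : ↥G, act ↑g p = p) →
      ∀ k, (∀ g : ↥G, act ↑g (homogeneousComponent k p) = homogeneousComponent k p) := by
    intro p hp k g
    rw [act, psi_homogeneousComponent]
    rw [show psi (↑((↑g : GL (Fin n) ℝ)⁻¹)) p = act ↑g p from rfl, hp g]
  -- main induction: every invariant homogeneous polynomial lies in the adjoin of T
  have main : ∀ d : ℕ, ∀ p : MvPolynomial (Fin n) ℝ, (∀ g : ↥G, act ↑g p = p) →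
      p.IsHomogeneous d → p ∈ Algebra.adjoin ℝ (T : Set (MvPolynomial (Fin n) ℝ)) := by
    intro d
    induction d using Nat.strong_induction_on with
    | _ d IH =>
      intro p hinv hhom
      rcases Nat.eq_zero_or_pos d with rfl | hd
      · rw [eq_C_of_isHomogeneous_zero hhom, ← MvPolynomial.algebraMap_eq]
        exact Subalgebra.algebraMap_mem _ _
      · have hpB : p ∈ B := ⟨hinv, d, hd, hhom⟩
        have hpT : p ∈ Submodule.span (MvPolynomial (Fin n) ℝ)
            (T : Set (MvPolynomial (Fin n) ℝ)) := by
          rw [hTspan]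
          exact Ideal.subset_span hpB
        obtain ⟨f, -, hf⟩ := Submodule.mem_span_finset.1 hpT
        have hf' : p = ∑ i ∈ T, f i * i := by
          rw [← hf]
          exact Finset.sum_congr rfl fun i _ => (smul_eq_mul _ _).symm
        have hp2 : p = ∑ i ∈ T, reyn G μ (f i) * i := by
          calc p = reyn G μ p := (reyn_of_invariant G μ hinv).symm
            _ = reyn G μ (∑ i ∈ T, f i * i) := by rw [← hf']
            _ = ∑ i ∈ T, reyn G μ (f i * i) := reyn_finset_sum G μ T _
            _ = ∑ i ∈ T, reyn G μ (f i) * i :=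
              Finset.sum_congr rfl fun i hi =>
                reyn_mul_invariant G μ (f i) i (hTB hi).1
        have hph : homogeneousComponent d p = p := by
          rw [homogeneousComponent_of_mem ((mem_homogeneousSubmodule d _).2 hhom), if_pos rfl]
        have hp3 : p = ∑ i ∈ T, homogeneousComponent d (reyn G μ (f i) * i) := by
          conv_lhs => rw [← hph, hp2, map_sum]
        rw [hp3]
        refine Subalgebra.sum_mem _ fun i hi => ?_
        obtain ⟨e, he, hhi⟩ := (hTB hi).2
        rw [homogeneousComponent_mul_right _ _ hhi d]
        split_ifs with hed
        · refine mul_mem ?_ (Algebra.subset_adjoin hi)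
          refine IH (d - e) (by omega) _ ?_ (homogeneousComponent_isHomogeneous _ _)
          exact hinv_hc _ (fun g => act_reyn G μ (f i) g) _
        · exact zero_mem _
  refine ⟨T, ?_⟩
  apply le_antisymm
  · rw [Algebra.adjoin_le_iff]
    intro x hx
    exact (mem_invariant_iff G x).2 (hTB hx).1
  · intro p hp
    have hinv : ∀ g : ↥G, act ↑g p = p := (mem_invariant_iff G p).1 hp
    rw [← sum_homogeneousComponent p]
    exact Subalgebra.sum_mem _ fun k _ =>
      main k _ (hinv_hc p hinv k) (homogeneousComponent_isHomogeneous k p)
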